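/- arXiv:1609.02763 — 2 statements merged into one kernel-verified Lean document; each statement's English description precedes it below -/
import Mathlib

section
/- Let A be an m×n real matrix, let k be a positive integer, and let δ_{2k} be the restricted isometry constant of A of order 2k, i.e. the smallest δ ≥ 0 such that (1−δ)‖x‖₂² ≤ ‖Ax‖₂² ≤ (1+δ)‖x‖₂² for every vector x ∈ ℝⁿ with at most 2k nonzero entries. Suppose δ_{2k} < √2 − 1. Then there exist constants C₁, C₂ > 0 depending only on δ_{2k} such that for every f ∈ ℝⁿ, every ε ≥ 0, and every e ∈ ℝᵐ with ‖e‖₂ ≤ ε, if b = A f + e, then any minimizer f* of ‖x‖₁ over the set {x ∈ ℝⁿ : ‖A x − b‖₂ ≤ ε} satisfies ‖f − f*‖₂ ≤ C₁ ε + C₂ ‖f − f^k‖₁ / √k, where f^k is a best k-term approximation of f, i.e. the vector obtained from f by keeping its k largest-magnitude entries and setting the remaining entries to zero. -/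
open Finset Matrix

/-- The Euclidean (ℓ²) norm of a vector in ℝⁿ. -/
noncomputable def l2norm {n : ℕ} (x : Fin n → ℝ) : ℝ := Real.sqrt (∑ i, (x i) ^ 2)

/-- The ℓ¹ norm of a vector in ℝⁿ. -/
noncomputable def l1norm {n : ℕ} (x : Fin n → ℝ) : ℝ := ∑ i, |x i|

/-- A vector is `k`-sparse if it has at most `k` nonzero entries. -/
def IsSparse {n : ℕ} (k : ℕ) (x : Fin n → ℝ) : Prop :=
  ∃ s : Finset (Fin n), s.card ≤ k ∧ ∀ i ∉ s, x i = 0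

/-- `fk` is a best `k`-term approximation of `f`: it is obtained from `f` by keeping
`k` largest-magnitude entries and setting the remaining entries to zero. -/
def IsBestKTermApprox {n : ℕ} (k : ℕ) (f fk : Fin n → ℝ) : Prop :=
  ∃ S : Finset (Fin n), S.card = k ∧ (∀ i ∈ S, ∀ j ∉ S, |f j| ≤ |f i|) ∧
    fk = fun i => if i ∈ S then f i else 0

namespace CS
variable {n : ℕ}

noncomputable def dot {n : ℕ} (x y : Fin n → ℝ) : ℝ := ∑ i, x i * y i

def res (S : Finset (Fin n)) (x : Fin n → ℝ) : Fin n → ℝ := fun i => if i ∈ S then x i else 0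

lemma res_apply_mem {S : Finset (Fin n)} {x : Fin n → ℝ} {i : Fin n} (h : i ∈ S) :
    res S x i = x i := if_pos h

lemma res_apply_not_mem {S : Finset (Fin n)} {x : Fin n → ℝ} {i : Fin n} (h : i ∉ S) :
    res S x i = 0 := if_neg h

lemma l2_nonneg (x : Fin n → ℝ) : 0 ≤ l2norm x := Real.sqrt_nonneg _

lemma sq_l2 (x : Fin n → ℝ) : l2norm x ^ 2 = ∑ i, (x i) ^ 2 :=
  Real.sq_sqrt (by positivity)

lemma l2_zero : l2norm (0 : Fin n → ℝ) = 0 := by simp [l2norm]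

lemma l2_neg (x : Fin n → ℝ) : l2norm (-x) = l2norm x := by simp [l2norm]

lemma l2_le (x : Fin n → ℝ) {a : ℝ} (ha : 0 ≤ a) (h : ∑ i, (x i) ^ 2 ≤ a ^ 2) :
    l2norm x ≤ a := by
  rw [l2norm, show a = Real.sqrt (a ^ 2) by rw [Real.sqrt_sq ha]]
  exact Real.sqrt_le_sqrt h

lemma le_of_sq_le_sq {a b : ℝ} (ha : 0 ≤ a) (hb : 0 ≤ b) (h : a ^ 2 ≤ b ^ 2) : a ≤ b := by
  nlinarith

lemma abs_dot_le (x y : Fin n → ℝ) : |dot x y| ≤ l2norm x * l2norm y := by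
  have h2 : (dot x y) ^ 2 ≤ (∑ i, (x i) ^ 2) * ∑ i, (y i) ^ 2 := by
    simpa [dot] using Finset.sum_mul_sq_le_sq_mul_sq univ x y
  have : |dot x y| = Real.sqrt ((dot x y) ^ 2) := (Real.sqrt_sq_eq_abs _).symm
  rw [this, l2norm, l2norm, ← Real.sqrt_mul (by positivity)]
  exact Real.sqrt_le_sqrt h2

lemma l2_add_le (x y : Fin n → ℝ) : l2norm (x + y) ≤ l2norm x + l2norm y := by
  apply l2_le _ (add_nonneg (l2_nonneg x) (l2_nonneg y))
  have hxy : dot x y ≤ l2norm x * l2norm y := le_trans (le_abs_self _) (abs_dot_le x y)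
  have : ∑ i, (x i + y i) ^ 2 = (∑ i, (x i)^2) + 2 * dot x y + ∑ i, (y i)^2 := by
    simp only [dot, Finset.mul_sum, ← Finset.sum_add_distrib]
    apply Finset.sum_congr rfl; intro i _; ring
  simp only [Pi.add_apply]
  rw [this, ← sq_l2 x, ← sq_l2 y]
  nlinarith [l2_nonneg x, l2_nonneg y]

lemma l2_smul (c : ℝ) (x : Fin n → ℝ) : l2norm (c • x) = |c| * l2norm x := by
  simp only [l2norm, Pi.smul_apply, smul_eq_mul, mul_pow, ← Finset.mul_sum]
  rw [Real.sqrt_mul (by positivity), Real.sqrt_sq_eq_abs]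

lemma l2_eq_zero {x : Fin n → ℝ} (h : l2norm x = 0) : x = 0 := by
  have h0 : ∑ i, (x i) ^ 2 = 0 := by
    have := sq_l2 x; rw [h] at this; simpa using this.symm
  funext i
  have := (Finset.sum_eq_zero_iff_of_nonneg (fun i _ => sq_nonneg (x i))).1 h0 i (mem_univ i)
  exact pow_eq_zero_iff (by norm_num) |>.1 this

lemma dot_self (x : Fin n → ℝ) : dot x x = l2norm x ^ 2 := by
  rw [sq_l2]; exact Finset.sum_congr rfl fun i _ => by ring

lemma dot_add_right (x p q : Fin n → ℝ) : dot x (p + q) = dot x p + dot x q := by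
  simp only [dot, Pi.add_apply, ← Finset.sum_add_distrib]
  exact Finset.sum_congr rfl fun i _ => by ring

lemma dot_add_left (x p q : Fin n → ℝ) : dot (p + q) x = dot p x + dot q x := by
  simp only [dot, Pi.add_apply, ← Finset.sum_add_distrib]
  exact Finset.sum_congr rfl fun i _ => by ring

lemma dot_smul_left (c : ℝ) (x y : Fin n → ℝ) : dot (c • x) y = c * dot x y := by
  simp [dot, Finset.mul_sum, mul_assoc]

lemma dot_smul_right (c : ℝ) (x y : Fin n → ℝ) : dot x (c • y) = c * dot x y := by
  simp only [dot, Pi.smul_apply, smul_eq_mul, Finset.mul_sum]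
  exact Finset.sum_congr rfl fun i _ => by ring

lemma dot_neg_right (x y : Fin n → ℝ) : dot x (-y) = -dot x y := by
  simp [dot, ← Finset.sum_neg_distrib]

lemma dot_zero_right (x : Fin n → ℝ) : dot x 0 = 0 := by simp [dot]

lemma four_dot (p q : Fin n → ℝ) :
    dot p q = ((l2norm (p + q)) ^ 2 - (l2norm (p - q)) ^ 2) / 4 := by
  rw [sq_l2, sq_l2, ← Finset.sum_sub_distrib]
  have : ∑ i, ((p + q) i ^ 2 - (p - q) i ^ 2) = ∑ i, 4 * (p i * q i) := by
    apply Finset.sum_congr rfl; intro i _; simp [Pi.add_apply, Pi.sub_apply]; ring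
  rw [this, ← Finset.mul_sum, dot]; ring

lemma sq_sum_res (S : Finset (Fin n)) (x : Fin n → ℝ) :
    ∑ i, (res S x i) ^ 2 = ∑ i ∈ S, (x i) ^ 2 := by
  simp only [res, apply_ite (· ^ 2), zero_pow, Finset.sum_ite_mem, Finset.univ_inter]
  norm_num

lemma sq_l2_res (S : Finset (Fin n)) (x : Fin n → ℝ) :
    l2norm (res S x) ^ 2 = ∑ i ∈ S, (x i) ^ 2 := by
  rw [show l2norm (res S x) = Real.sqrt (∑ i, (res S x i)^2) from rfl,
    Real.sq_sqrt (by positivity), sq_sum_res]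

lemma res_split {S R : Finset (Fin n)} (h : S ⊆ R) (x : Fin n → ℝ) :
    res R x = res S x + res (R \ S) x := by
  funext i
  by_cases hi : i ∈ S
  · simp [res, hi, h hi, Finset.mem_sdiff]
  · by_cases hir : i ∈ R <;> simp [res, hi, hir, Finset.mem_sdiff]

lemma res_univ (x : Fin n → ℝ) : res Finset.univ x = x := by
  funext i; simp [res]

lemma l1_le_sqrt_l2 {S : Finset (Fin n)} {k : ℕ} (hS : S.card ≤ k) (x : Fin n → ℝ) :
    ∑ i ∈ S, |x i| ≤ Real.sqrt k * l2norm (res S x) := by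
  have h2 : (∑ i ∈ S, |x i| * 1) ^ 2 ≤ (∑ i ∈ S, |x i| ^ 2) * ∑ i ∈ S, (1:ℝ) ^ 2 :=
    Finset.sum_mul_sq_le_sq_mul_sq S (fun i => |x i|) (fun _ => 1)
  simp only [mul_one, one_pow, Finset.sum_const, nsmul_eq_mul, sq_abs] at h2
  have hnn : (0:ℝ) ≤ ∑ i ∈ S, |x i| := Finset.sum_nonneg fun i _ => abs_nonneg _
  have hr : (0:ℝ) ≤ l2norm (res S x) := Real.sqrt_nonneg _
  apply le_of_sq_le_sq hnn (mul_nonneg (Real.sqrt_nonneg _) hr)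
  rw [mul_pow, Real.sq_sqrt (Nat.cast_nonneg k), sq_l2_res]
  calc (∑ i ∈ S, |x i|) ^ 2 ≤ (∑ i ∈ S, (x i)^2) * (S.card : ℝ) := h2
  _ ≤ (k:ℝ) * ∑ i ∈ S, (x i)^2 := by
      rw [mul_comm]
      exact mul_le_mul_of_nonneg_right (by exact_mod_cast hS)
        (Finset.sum_nonneg fun i _ => sq_nonneg _)

lemma top_select (h : Fin n → ℝ) (R : Finset (Fin n)) (j : ℕ) (hj : j ≤ R.card) :
    ∃ T ⊆ R, T.card = j ∧ ∀ i ∈ T, ∀ x ∈ R \ T, |h x| ≤ |h i| := by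
  induction j with
  | zero => exact ⟨∅, Finset.empty_subset R, rfl, by simp⟩
  | succ j ih =>
    obtain ⟨T, hTR, hTcard, hTtop⟩ := ih (Nat.le_of_succ_le hj)
    have hne : (R \ T).Nonempty := by
      rw [← Finset.card_pos, Finset.card_sdiff_of_subset hTR, hTcard]; omega
    obtain ⟨a, ha, hamax⟩ := Finset.exists_max_image (R \ T) (fun i => |h i|) hne
    refine ⟨insert a T, Finset.insert_subset (Finset.mem_sdiff.1 ha).1 hTR, ?_, ?_⟩
    · rw [Finset.card_insert_of_notMem (Finset.mem_sdiff.1 ha).2, hTcard]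
    · intro i hi x hx
      have hx' : x ∈ R \ T := by
        rw [Finset.mem_sdiff] at hx ⊢
        exact ⟨hx.1, fun hxT => hx.2 (Finset.mem_insert_of_mem hxT)⟩
      rcases Finset.mem_insert.1 hi with rfl | hiT
      · exact hamax x hx'
      · exact hTtop i hiT x hx'

lemma main_split (h : Fin n → ℝ) {k : ℕ} (hk : 0 < k) (R : Finset (Fin n)) :
    ∃ T₁ : Finset (Fin n), ∃ l : List (Finset (Fin n)),
      T₁ ⊆ R ∧ T₁.card ≤ k ∧ (∀ T ∈ l, T ⊆ R \ T₁ ∧ T.card ≤ k) ∧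
      res R h = res T₁ h + (l.map (fun T => res T h)).sum ∧
      (l.map (fun T => l2norm (res T h))).sum ≤ (∑ i ∈ R, |h i|) / Real.sqrt k := by
  induction R using Finset.strongInduction with
  | _ R ih =>
    by_cases hcard : R.card ≤ k
    · refine ⟨R, [], le_refl R, hcard, by simp, by simp, ?_⟩
      simp only [List.map_nil, List.sum_nil]
      exact div_nonneg (Finset.sum_nonneg fun i _ => abs_nonneg _) (Real.sqrt_nonneg _)
    · push_neg at hcard
      obtain ⟨T₁, hT₁R, hT₁card, hT₁top⟩ := top_select h R k (le_of_lt hcard)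
      have hT₁ne : T₁.Nonempty := Finset.card_pos.1 (by omega)
      have hss : R \ T₁ ⊂ R := Finset.sdiff_ssubset hT₁R hT₁ne
      obtain ⟨T₂, l₃, hT₂sub, hT₂card, hl₃, hdecomp, hbound⟩ := ih (R \ T₁) hss
      have hkpos : (0:ℝ) < k := by exact_mod_cast hk
      have hskpos : (0:ℝ) < Real.sqrt k := Real.sqrt_pos.2 hkpos
      set L : ℝ := ∑ i ∈ T₁, |h i| with hL
      have hLnn : 0 ≤ L := Finset.sum_nonneg fun i _ => abs_nonneg _
      have hdom : ∀ i ∈ T₂, |h i| ≤ L / k := by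
        intro i hi
        have hiR : i ∈ R \ T₁ := hT₂sub hi
        have hle : ∀ j ∈ T₁, |h i| ≤ |h j| := fun j hj => hT₁top j hj i hiR
        have hsum : (T₁.card : ℝ) * |h i| ≤ L := by
          rw [hL]
          calc (T₁.card : ℝ) * |h i| = ∑ _j ∈ T₁, |h i| := by
                rw [Finset.sum_const, nsmul_eq_mul]
          _ ≤ ∑ j ∈ T₁, |h j| := Finset.sum_le_sum hle
        rw [hT₁card] at hsum
        rw [div_eq_inv_mul, ← mul_le_mul_iff_right₀ hkpos, ← mul_assoc,
          mul_inv_cancel₀ (ne_of_gt hkpos), one_mul]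
        exact hsum
      have hT₂l2 : l2norm (res T₂ h) ≤ L / Real.sqrt k := by
        apply l2_le _ (div_nonneg hLnn (le_of_lt hskpos))
        rw [sq_sum_res, div_pow, Real.sq_sqrt (le_of_lt hkpos)]
        calc ∑ i ∈ T₂, (h i) ^ 2 ≤ ∑ _i ∈ T₂, (L / k) ^ 2 := by
              apply Finset.sum_le_sum
              intro i hi
              have := hdom i hi
              nlinarith [abs_nonneg (h i), sq_abs (h i)]
        _ = (T₂.card : ℝ) * (L / k)^2 := by rw [Finset.sum_const, nsmul_eq_mul]
        _ ≤ (k : ℝ) * (L / k)^2 := by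
              exact mul_le_mul_of_nonneg_right (by exact_mod_cast hT₂card) (by positivity)
        _ = L ^ 2 / k := by field_simp
      refine ⟨T₁, T₂ :: l₃, hT₁R, le_of_eq hT₁card, ?_, ?_, ?_⟩
      · intro T hT
        rcases List.mem_cons.1 hT with rfl | hTl₃
        · exact ⟨hT₂sub, hT₂card⟩
        · obtain ⟨h1, h2⟩ := hl₃ T hTl₃
          exact ⟨h1.trans Finset.sdiff_subset, h2⟩
      · rw [res_split hT₁R h, hdecomp]
        simp [add_assoc]
      · simp only [List.map_cons, List.sum_cons]
        have hsplit : ∑ i ∈ R, |h i| = L + ∑ i ∈ R \ T₁, |h i| := by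
          rw [hL, ← Finset.sum_sdiff hT₁R]; ring
        rw [hsplit, add_div]
        exact add_le_add hT₂l2 hbound

lemma RO {m k : ℕ} (A : Matrix (Fin m) (Fin n) ℝ) (δ : ℝ)
    (hRIP : ∀ x : Fin n → ℝ, IsSparse (2 * k) x →
      (1 - δ) * l2norm x ^ 2 ≤ l2norm (A.mulVec x) ^ 2 ∧
        l2norm (A.mulVec x) ^ 2 ≤ (1 + δ) * l2norm x ^ 2)
    {S T : Finset (Fin n)} (hdisj : Disjoint S T) (hS : S.card ≤ k) (hT : T.card ≤ k)
    {x y : Fin n → ℝ} (hx : ∀ i ∉ S, x i = 0) (hy : ∀ i ∉ T, y i = 0) :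
    dot (A.mulVec x) (A.mulVec y) ≤ δ * (l2norm x * l2norm y) := by
  rcases eq_or_lt_of_le (l2_nonneg x) with hx0 | hx0
  · rw [l2_eq_zero hx0.symm]
    simp [dot, l2norm]
  rcases eq_or_lt_of_le (l2_nonneg y) with hy0 | hy0
  · rw [l2_eq_zero hy0.symm]
    simp [dot, l2norm]
  set a := l2norm x with ha
  set b := l2norm y with hb
  obtain ⟨x₁, hx₁⟩ : ∃ x₁, x₁ = a⁻¹ • x := ⟨_, rfl⟩
  obtain ⟨y₁, hy₁⟩ : ∃ y₁, y₁ = b⁻¹ • y := ⟨_, rfl⟩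
  have hx₁n : l2norm x₁ = 1 := by
    rw [hx₁, l2_smul, abs_of_pos (inv_pos.2 hx0), inv_mul_cancel₀ (ne_of_gt hx0)]
  have hy₁n : l2norm y₁ = 1 := by
    rw [hy₁, l2_smul, abs_of_pos (inv_pos.2 hy0), inv_mul_cancel₀ (ne_of_gt hy0)]
  have hx₁s : ∀ i ∉ S, x₁ i = 0 := fun i hi => by simp [hx₁, hx i hi]
  have hy₁s : ∀ i ∉ T, y₁ i = 0 := fun i hi => by simp [hy₁, hy i hi]
  have hcross : ∀ i, x₁ i * y₁ i = 0 := by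
    intro i
    by_cases hiS : i ∈ S
    · rw [hy₁s i (Finset.disjoint_left.1 hdisj hiS), mul_zero]
    · rw [hx₁s i hiS, zero_mul]
  have hcard : (S ∪ T).card ≤ 2 * k := by
    calc (S ∪ T).card ≤ S.card + T.card := Finset.card_union_le S T
    _ ≤ 2 * k := by omega
  have hsp : ∀ c : ℝ, IsSparse (2 * k) (x₁ + c • y₁) := by
    intro c
    refine ⟨S ∪ T, hcard, fun i hi => ?_⟩
    rw [Finset.mem_union] at hi; push_neg at hi
    simp [hx₁s i hi.1, hy₁s i hi.2]
  have hsq : ∀ c : ℝ, c = 1 ∨ c = -1 → l2norm (x₁ + c • y₁) ^ 2 = 2 := by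
    intro c hc
    rw [sq_l2]
    have hterm : ∀ i, (x₁ i + c * y₁ i) ^ 2 = x₁ i ^ 2 + c^2 * y₁ i ^2 + 2*c*(x₁ i * y₁ i) := by
      intro i; ring
    have hc2 : c ^ 2 = 1 := by rcases hc with rfl | rfl <;> norm_num
    calc ∑ i, ((x₁ + c • y₁) i) ^ 2
        = ∑ i, (x₁ i ^ 2 + y₁ i ^ 2) := by
          apply Finset.sum_congr rfl; intro i _
          simp only [Pi.add_apply, Pi.smul_apply, smul_eq_mul]
          rw [hterm i, hcross i, hc2]; ring
    _ = (∑ i, x₁ i ^2) + ∑ i, y₁ i ^2 := Finset.sum_add_distrib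
    _ = 2 := by rw [← sq_l2, ← sq_l2, hx₁n, hy₁n]; norm_num
  have hdot1 : dot (A.mulVec x₁) (A.mulVec y₁) ≤ δ := by
    rw [four_dot, ← Matrix.mulVec_add, ← Matrix.mulVec_sub]
    have h1 := (hRIP (x₁ + y₁) (by simpa using hsp 1)).2
    have hsub : x₁ - y₁ = x₁ + (-1 : ℝ) • y₁ := by funext i; simp; ring
    have h2 := (hRIP (x₁ - y₁) (by rw [hsub]; exact hsp (-1))).1
    have e1 : l2norm (x₁ + y₁) ^ 2 = 2 := by simpa using hsq 1 (Or.inl rfl)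
    have e2 : l2norm (x₁ - y₁) ^ 2 = 2 := by
      rw [hsub]; exact hsq (-1) (Or.inr rfl)
    rw [e1] at h1; rw [e2] at h2
    linarith
  have hxeq : x = a • x₁ := by rw [hx₁, smul_smul, mul_inv_cancel₀ (ne_of_gt hx0), one_smul]
  have hyeq : y = b • y₁ := by rw [hy₁, smul_smul, mul_inv_cancel₀ (ne_of_gt hy0), one_smul]
  calc dot (A.mulVec x) (A.mulVec y)
      = a * b * dot (A.mulVec x₁) (A.mulVec y₁) := by
        conv_lhs => rw [hxeq, hyeq]
        rw [Matrix.mulVec_smul, Matrix.mulVec_smul, dot_smul_left, dot_smul_right]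
        ring
  _ ≤ a * b * δ := mul_le_mul_of_nonneg_left hdot1 (le_of_lt (mul_pos hx0 hy0))
  _ = δ * (a * b) := by ring

lemma RO_abs {m k : ℕ} (A : Matrix (Fin m) (Fin n) ℝ) (δ : ℝ)
    (hRIP : ∀ x : Fin n → ℝ, IsSparse (2 * k) x →
      (1 - δ) * l2norm x ^ 2 ≤ l2norm (A.mulVec x) ^ 2 ∧
        l2norm (A.mulVec x) ^ 2 ≤ (1 + δ) * l2norm x ^ 2)
    {S T : Finset (Fin n)} (hdisj : Disjoint S T) (hS : S.card ≤ k) (hT : T.card ≤ k)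
    {x y : Fin n → ℝ} (hx : ∀ i ∉ S, x i = 0) (hy : ∀ i ∉ T, y i = 0) :
    |dot (A.mulVec x) (A.mulVec y)| ≤ δ * (l2norm x * l2norm y) := by
  rw [abs_le]
  refine ⟨?_, RO A δ hRIP hdisj hS hT hx hy⟩
  have := RO A δ hRIP hdisj hS hT hx (y := -y) (fun i hi => by simp [hy i hi])
  rw [Matrix.mulVec_neg, dot_neg_right, l2_neg] at this
  linarith

lemma list_sum_neg {α : Type*} (l : List α) (f : α → ℝ) :
    (l.map (fun a => -f a)).sum = -(l.map f).sum := by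
  induction l with
  | nil => simp
  | cons a t ih => simp [ih]; ring

lemma mulVec_list_sum {m : ℕ} (A : Matrix (Fin m) (Fin n) ℝ) (l : List (Fin n → ℝ)) :
    A.mulVec l.sum = (l.map A.mulVec).sum := by
  induction l with
  | nil => simp [Matrix.mulVec_zero]
  | cons a t ih => simp [Matrix.mulVec_add, ih]

lemma dot_list_sum (x : Fin n → ℝ) (l : List (Fin n → ℝ)) :
    dot x l.sum = (l.map (fun p => dot x p)).sum := by
  induction l with
  | nil => simp [dot_zero_right]
  | cons a t ih => simp [dot_add_right, ih]

lemma l2_list_sum (l : List (Fin n → ℝ)) :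
    l2norm l.sum ≤ (l.map l2norm).sum := by
  induction l with
  | nil => simp [l2_zero]
  | cons a t ih =>
    simp only [List.sum_cons, List.map_cons]
    exact le_trans (l2_add_le a t.sum) (by linarith)

lemma abs_sum_res (S : Finset (Fin n)) (x : Fin n → ℝ) :
    l1norm (res S x) = ∑ i ∈ S, |x i| := by
  simp only [l1norm, res, apply_ite abs, abs_zero, Finset.sum_ite_mem, Finset.univ_inter]

lemma list_sum_const_mul {α : Type*} (l : List α) (c : ℝ) (f : α → ℝ) :
    (l.map (fun a => c * f a)).sum = c * (l.map f).sum := by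
  induction l with
  | nil => simp
  | cons a t ih => simp [ih]; ring

end CS

set_option maxHeartbeats 4000000 in
theorem robust_recovery {m n k : ℕ} (hk : 0 < k)
    (A : Matrix (Fin m) (Fin n) ℝ) (δ : ℝ)
    (hδ : IsLeast {d : ℝ | 0 ≤ d ∧ ∀ x : Fin n → ℝ, IsSparse (2 * k) x →
        (1 - d) * l2norm x ^ 2 ≤ l2norm (A.mulVec x) ^ 2 ∧
          l2norm (A.mulVec x) ^ 2 ≤ (1 + d) * l2norm x ^ 2} δ)
    (hδlt : δ < Real.sqrt 2 - 1) :
    ∃ C₁ C₂ : ℝ, 0 < C₁ ∧ 0 < C₂ ∧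
      ∀ (f : Fin n → ℝ) (ε : ℝ), 0 ≤ ε → ∀ e : Fin m → ℝ, l2norm e ≤ ε →
        ∀ b : Fin m → ℝ, b = A.mulVec f + e →
          ∀ fstar : Fin n → ℝ,
            (l2norm (A.mulVec fstar - b) ≤ ε ∧
              ∀ x : Fin n → ℝ, l2norm (A.mulVec x - b) ≤ ε → l1norm fstar ≤ l1norm x) →
            ∀ fk : Fin n → ℝ, IsBestKTermApprox k f fk →
              l2norm (f - fstar) ≤ C₁ * ε + C₂ * l1norm (f - fk) / Real.sqrt k := by
  obtain ⟨⟨hδ0, hRIP⟩, -⟩ := hδ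
  have hs2 : Real.sqrt 2 ^ 2 = 2 := Real.sq_sqrt (by norm_num)
  have hs2nn : (0:ℝ) ≤ Real.sqrt 2 := Real.sqrt_nonneg 2
  obtain ⟨D, hDdef⟩ : ∃ D : ℝ, D = 1 - (1 + Real.sqrt 2) * δ := ⟨_, rfl⟩
  have hD : 0 < D := by rw [hDdef]; nlinarith [hδlt]
  have hδ1 : δ < 1 := by nlinarith
  have h1δ : (0:ℝ) < 1 + δ := by linarith
  have hs1nn : (0:ℝ) ≤ Real.sqrt (1 + δ) := Real.sqrt_nonneg _
  have hs1pos : (0:ℝ) < Real.sqrt (1 + δ) := Real.sqrt_pos.2 h1δ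
  refine ⟨4 * Real.sqrt (1 + δ) / D, 4 * Real.sqrt 2 * δ / D + 2,
    div_pos (by positivity) hD, ?_, ?_⟩
  · have h1 : (0:ℝ) ≤ 4 * Real.sqrt 2 * δ / D :=
      div_nonneg (mul_nonneg (by positivity) hδ0) hD.le
    linarith
  rintro f ε hε e he b hb fstar ⟨hfeas, hmin⟩ fk ⟨S, hScard, hStop, hfk⟩
  have hkR : (0:ℝ) < k := by exact_mod_cast hk
  have hsk : (0:ℝ) < Real.sqrt k := Real.sqrt_pos.2 hkR
  obtain ⟨h, hh⟩ : ∃ h : Fin n → ℝ, h = fstar - f := ⟨_, rfl⟩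
  obtain ⟨R, hR⟩ : ∃ R : Finset (Fin n), R = Finset.univ \ S := ⟨_, rfl⟩
  have hffk : f - fk = CS.res R f := by
    funext i
    by_cases hi : i ∈ S
    · simp [hfk, CS.res, hR, hi]
    · simp [hfk, CS.res, hR, hi]
  obtain ⟨e₀, he₀def⟩ : ∃ x : ℝ, x = ∑ i ∈ R, |f i| := ⟨_, rfl⟩
  have he0 : l1norm (f - fk) = e₀ := by rw [hffk, CS.abs_sum_res, he₀def]
  have he₀nn : 0 ≤ e₀ := by
    rw [he₀def]; exact Finset.sum_nonneg fun i _ => abs_nonneg _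
  obtain ⟨E, hEdef⟩ : ∃ x : ℝ, x = e₀ / Real.sqrt k := ⟨_, rfl⟩
  have hEnn : 0 ≤ E := by rw [hEdef]; exact div_nonneg he₀nn hsk.le
  -- tube constraint
  have hAh : l2norm (A.mulVec h) ≤ 2 * ε := by
    have heq : A.mulVec h = (A.mulVec fstar - b) + e := by
      rw [hh, Matrix.mulVec_sub, hb]; abel
    rw [heq]
    calc l2norm ((A.mulVec fstar - b) + e) ≤ l2norm (A.mulVec fstar - b) + l2norm e :=
          CS.l2_add_le _ _
    _ ≤ ε + ε := add_le_add hfeas he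
    _ = 2 * ε := by ring
  -- f is feasible
  have hffeas : l2norm (A.mulVec f - b) ≤ ε := by
    have heq : A.mulVec f - b = -e := by rw [hb]; abel
    rw [heq, CS.l2_neg]; exact he
  have hfstar : ∀ i, fstar i = f i + h i := fun i => by rw [hh]; simp
  -- cone constraint
  have hcone : ∑ i ∈ R, |h i| ≤ (∑ i ∈ S, |h i|) + 2 * e₀ := by
    have hml := hmin f hffeas
    have hsplit : ∀ x : Fin n → ℝ, l1norm x = (∑ i ∈ R, |x i|) + ∑ i ∈ S, |x i| := by
      intro x; rw [l1norm, hR, ← Finset.sum_sdiff (Finset.subset_univ S)]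
    have h1 : ∑ i ∈ S, (|f i| - |h i|) ≤ ∑ i ∈ S, |fstar i| := by
      apply Finset.sum_le_sum; intro i _
      rw [hfstar i]
      have := abs_add_le (f i + h i) (-(h i))
      simp only [add_neg_cancel_right, abs_neg] at this
      linarith
    have h2 : ∑ i ∈ R, (|h i| - |f i|) ≤ ∑ i ∈ R, |fstar i| := by
      apply Finset.sum_le_sum; intro i _
      rw [hfstar i]
      have := abs_add_le (f i + h i) (-(f i))
      simp only [abs_neg] at this
      have h3 : f i + h i + -(f i) = h i := by ring
      rw [h3] at this
      linarith
    rw [hsplit fstar, hsplit f] at hml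
    rw [Finset.sum_sub_distrib] at h1 h2
    linarith [he₀def]
  -- block decomposition of the complement
  obtain ⟨T₁, l, hT₁R, hT₁k, hl, hdecomp, hbound⟩ := CS.main_split h hk R
  have hST₁ : Disjoint S T₁ := Finset.disjoint_left.2 fun i hiS hiT₁ => by
    have := hT₁R hiT₁; rw [hR] at this
    exact (Finset.mem_sdiff.1 this).2 hiS
  obtain ⟨U, hUdef⟩ : ∃ U : Finset (Fin n), U = S ∪ T₁ := ⟨_, rfl⟩
  obtain ⟨u, hudef⟩ : ∃ u : Fin n → ℝ, u = CS.res U h := ⟨_, rfl⟩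
  have hu : u = CS.res S h + CS.res T₁ h := by
    rw [hudef, hUdef, CS.res_split (Finset.subset_union_left (s₂ := T₁)) h]
    congr 1
    rw [Finset.union_sdiff_cancel_left hST₁]
  have hU2k : U.card ≤ 2 * k := by
    rw [hUdef]
    have := Finset.card_union_le S T₁
    omega
  have husp : IsSparse (2 * k) u :=
    ⟨U, hU2k, fun i hi => by rw [hudef]; exact CS.res_apply_not_mem hi⟩
  obtain ⟨X, hXdef⟩ : ∃ x : ℝ, x = l2norm u := ⟨_, rfl⟩
  have hX0 : 0 ≤ X := by rw [hXdef]; exact CS.l2_nonneg u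
  have hSsq : l2norm (CS.res S h) ^ 2 + l2norm (CS.res T₁ h) ^ 2 = X ^ 2 := by
    rw [hXdef, hudef, CS.sq_l2_res, CS.sq_l2_res, CS.sq_l2_res, hUdef,
      Finset.sum_union hST₁]
  have hSle : l2norm (CS.res S h) ≤ X :=
    CS.le_of_sq_le_sq (CS.l2_nonneg _) hX0 (by nlinarith [CS.l2_nonneg (CS.res T₁ h)])
  obtain ⟨w, hwdef⟩ : ∃ w : Fin n → ℝ, w = (l.map (fun T => CS.res T h)).sum := ⟨_, rfl⟩
  rw [← hwdef] at hdecomp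
  have hhdec : h = u + w := by
    have huniv : h = CS.res S h + CS.res R h := by
      conv_lhs => rw [← CS.res_univ h, CS.res_split (Finset.subset_univ S) h]
      rw [hR]
    rw [huniv, hdecomp, hu]; abel
  have hAw : A.mulVec w = (l.map (fun T => A.mulVec (CS.res T h))).sum := by
    rw [hwdef, CS.mulVec_list_sum, List.map_map]
    rfl
  obtain ⟨dotlist, hdldef⟩ : ∃ x : ℝ,
      x = (l.map (fun T => CS.dot (A.mulVec u) (A.mulVec (CS.res T h)))).sum := ⟨_, rfl⟩
  have hAu2 : CS.dot (A.mulVec u) (A.mulVec h) = l2norm (A.mulVec u) ^ 2 + dotlist := by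
    calc CS.dot (A.mulVec u) (A.mulVec h)
        = CS.dot (A.mulVec u) (A.mulVec u + A.mulVec w) := by
          rw [← Matrix.mulVec_add, ← hhdec]
    _ = CS.dot (A.mulVec u) (A.mulVec u) + CS.dot (A.mulVec u) (A.mulVec w) :=
          CS.dot_add_right _ _ _
    _ = l2norm (A.mulVec u) ^ 2 + dotlist := by
          rw [CS.dot_self, hAw, CS.dot_list_sum, List.map_map, hdldef]
          rfl
  obtain ⟨Sg, hSgdef⟩ : ∃ x : ℝ, x = (l.map (fun T => l2norm (CS.res T h))).sum := ⟨_, rfl⟩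
  rw [← hSgdef] at hbound
  -- cross-term bounds
  have hcross : ∀ T ∈ l, |CS.dot (A.mulVec u) (A.mulVec (CS.res T h))| ≤
      Real.sqrt 2 * δ * X * l2norm (CS.res T h) := by
    intro T hT
    obtain ⟨hTsub, hTk⟩ := hl T hT
    have hTR : T ⊆ R := hTsub.trans Finset.sdiff_subset
    have hdST : Disjoint S T := Finset.disjoint_left.2 fun i hiS hiT => by
      have := hTR hiT; rw [hR] at this
      exact (Finset.mem_sdiff.1 this).2 hiS
    have hdT₁T : Disjoint T₁ T := Finset.disjoint_left.2 fun i hiT₁ hiT =>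
      (Finset.mem_sdiff.1 (hTsub hiT)).2 hiT₁
    have h1 := CS.RO_abs A δ hRIP hdST (le_of_eq hScard) hTk
      (x := CS.res S h) (y := CS.res T h)
      (fun i hi => CS.res_apply_not_mem hi) (fun i hi => CS.res_apply_not_mem hi)
    have h2 := CS.RO_abs A δ hRIP hdT₁T hT₁k hTk
      (x := CS.res T₁ h) (y := CS.res T h)
      (fun i hi => CS.res_apply_not_mem hi) (fun i hi => CS.res_apply_not_mem hi)
    have hAusplit : A.mulVec u = A.mulVec (CS.res S h) + A.mulVec (CS.res T₁ h) := by
      rw [hu, Matrix.mulVec_add]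
    rw [hAusplit, CS.dot_add_left]
    have habs := abs_add_le (CS.dot (A.mulVec (CS.res S h)) (A.mulVec (CS.res T h)))
      (CS.dot (A.mulVec (CS.res T₁ h)) (A.mulVec (CS.res T h)))
    have hab : l2norm (CS.res S h) + l2norm (CS.res T₁ h) ≤ Real.sqrt 2 * X := by
      apply CS.le_of_sq_le_sq (add_nonneg (CS.l2_nonneg _) (CS.l2_nonneg _))
        (mul_nonneg hs2nn hX0)
      rw [mul_pow, hs2]
      nlinarith [CS.l2_nonneg (CS.res S h), CS.l2_nonneg (CS.res T₁ h), hSsq,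
        sq_nonneg (l2norm (CS.res S h) - l2norm (CS.res T₁ h))]
    have hc0 : 0 ≤ l2norm (CS.res T h) := CS.l2_nonneg _
    calc |CS.dot (A.mulVec (CS.res S h)) (A.mulVec (CS.res T h)) +
          CS.dot (A.mulVec (CS.res T₁ h)) (A.mulVec (CS.res T h))| ≤ _ + _ := habs
    _ ≤ δ * (l2norm (CS.res S h) * l2norm (CS.res T h)) +
        δ * (l2norm (CS.res T₁ h) * l2norm (CS.res T h)) := add_le_add h1 h2
    _ = δ * ((l2norm (CS.res S h) + l2norm (CS.res T₁ h)) * l2norm (CS.res T h)) := by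
        ring
    _ ≤ δ * (Real.sqrt 2 * X * l2norm (CS.res T h)) := by
        apply mul_le_mul_of_nonneg_left _ hδ0
        exact mul_le_mul_of_nonneg_right hab hc0
    _ = Real.sqrt 2 * δ * X * l2norm (CS.res T h) := by ring
  have hcross_sum : -dotlist ≤ Real.sqrt 2 * δ * X * Sg := by
    have h1 : (l.map (fun T => -(Real.sqrt 2 * δ * X * l2norm (CS.res T h)))).sum ≤
        dotlist := by
      rw [hdldef]
      exact List.sum_le_sum fun T hT => (abs_le.1 (hcross T hT)).1
    have h2 : (l.map (fun T => -(Real.sqrt 2 * δ * X * l2norm (CS.res T h)))).sum =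
        -(Real.sqrt 2 * δ * X * Sg) := by
      rw [CS.list_sum_neg, hSgdef, CS.list_sum_const_mul l (Real.sqrt 2 * δ * X)
        (fun T => l2norm (CS.res T h))]
    rw [h2] at h1
    linarith
  -- bound on ⟨Au, Ah⟩
  have ha1 : l2norm (A.mulVec u) ≤ Real.sqrt (1 + δ) * X := by
    apply CS.le_of_sq_le_sq (CS.l2_nonneg _) (mul_nonneg hs1nn hX0)
    rw [mul_pow, Real.sq_sqrt h1δ.le, hXdef]
    exact (hRIP u husp).2
  have hdotAuh : CS.dot (A.mulVec u) (A.mulVec h) ≤ Real.sqrt (1 + δ) * X * (2 * ε) := by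
    calc CS.dot (A.mulVec u) (A.mulVec h) ≤ |CS.dot (A.mulVec u) (A.mulVec h)| :=
          le_abs_self _
    _ ≤ l2norm (A.mulVec u) * l2norm (A.mulVec h) := CS.abs_dot_le _ _
    _ ≤ (Real.sqrt (1 + δ) * X) * (2 * ε) :=
          mul_le_mul ha1 hAh (CS.l2_nonneg _) (mul_nonneg hs1nn hX0)
  -- main inequality
  have hlow := (hRIP u husp).1
  rw [← hXdef] at hlow
  have hmain : (1 - δ) * X ^ 2 ≤
      Real.sqrt (1 + δ) * X * (2 * ε) + Real.sqrt 2 * δ * X * Sg := by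
    have hid : l2norm (A.mulVec u) ^ 2 = CS.dot (A.mulVec u) (A.mulVec h) - dotlist := by
      linarith [hAu2]
    linarith [hlow, hdotAuh, hcross_sum]
  -- bound Sg
  have hSgb : Sg ≤ X + 2 * E := by
    have hl1S := CS.l1_le_sqrt_l2 (le_of_eq hScard) h
    calc Sg ≤ (∑ i ∈ R, |h i|) / Real.sqrt k := hbound
    _ ≤ ((Real.sqrt k * X) + 2 * e₀) / Real.sqrt k := by
        apply div_le_div_of_nonneg_right ?_ hsk.le
        have : Real.sqrt k * l2norm (CS.res S h) ≤ Real.sqrt k * X :=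
          mul_le_mul_of_nonneg_left hSle hsk.le
        linarith [hcone]
    _ = X + 2 * E := by
        rw [hEdef, add_div, mul_comm, mul_div_assoc, div_self (ne_of_gt hsk), mul_one,
          mul_div_assoc]
  -- bound on X
  have hXb : D * X ≤ 2 * Real.sqrt (1 + δ) * ε + 2 * Real.sqrt 2 * δ * E := by
    have hkey : (1 - δ) * X ^ 2 ≤
        Real.sqrt (1 + δ) * X * (2 * ε) + Real.sqrt 2 * δ * X * (X + 2 * E) := by
      have hmono : Real.sqrt 2 * δ * X * Sg ≤ Real.sqrt 2 * δ * X * (X + 2 * E) :=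
        mul_le_mul_of_nonneg_left hSgb (by positivity)
      linarith [hmain]
    rcases eq_or_lt_of_le hX0 with hX | hX
    · rw [← hX, mul_zero]
      positivity
    · have h3 : D * X * X ≤ (2 * Real.sqrt (1 + δ) * ε + 2 * Real.sqrt 2 * δ * E) * X := by
        rw [hDdef]
        nlinarith [hkey]
      exact le_of_mul_le_mul_right h3 hX
  -- conclusion
  have hfh : f - fstar = -h := by rw [hh]; abel
  have hfinal : l2norm (f - fstar) ≤ 2 * X + 2 * E := by
    rw [hfh, CS.l2_neg]
    have hw : l2norm w ≤ Sg := by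
      rw [hwdef, hSgdef]
      calc l2norm (l.map (fun T => CS.res T h)).sum ≤
          ((l.map (fun T => CS.res T h)).map l2norm).sum := CS.l2_list_sum _
      _ = (l.map (fun T => l2norm (CS.res T h))).sum := by rw [List.map_map]; rfl
    calc l2norm h = l2norm (u + w) := by rw [← hhdec]
    _ ≤ l2norm u + l2norm w := CS.l2_add_le _ _
    _ ≤ X + Sg := add_le_add (le_of_eq hXdef.symm) hw
    _ ≤ X + (X + 2 * E) := by linarith [hSgb]
    _ = 2 * X + 2 * E := by ring
  have h2X : 2 * X ≤ (4 * Real.sqrt (1 + δ) * ε + 4 * Real.sqrt 2 * δ * E) / D := by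
    rw [le_div_iff₀ hD]
    nlinarith [hXb]
  have hrw : 4 * Real.sqrt (1 + δ) / D * ε + (4 * Real.sqrt 2 * δ / D + 2) *
      l1norm (f - fk) / Real.sqrt k =
      (4 * Real.sqrt (1 + δ) * ε + 4 * Real.sqrt 2 * δ * E) / D + 2 * E := by
    rw [he0, hEdef]
    field_simp
    ring
  rw [hrw]
  linarith [hfinal, h2X]
end

section
/- Let c₀ > 0 and let p₀ : ℝ³ → ℂ be a Schwartz function that is even in its third coordinate. Define p(x,t) = ∫_{ℝ³} cos(2π c₀ ‖ξ‖ t) (𝓕p₀)(ξ) e^{2πi⟨x,ξ⟩} dξ (the Fourier-domain solution of the free-space wave equation with initial pressure p₀ and zero initial velocity). Then for all (x₁, x₂) ∈ ℝ² and all t ∈ ℝ, the trace of p on the sensor plane x₃ = 0 admits the representation p(x₁, x₂, 0, t) = ∫_{ℝ²} e^{2πi(x₁ k₁ + x₂ k₂)} [ 2 ∫_{c₀‖k_S‖}^∞ ((ω/c₀²)/√((ω/c₀)² − ‖k_S‖²)) · (𝓕p₀)(k₁, k₂, √((ω/c₀)² − ‖k_S‖²)) · cos(2π ω t) dω ] dk_S,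 where k_S = (k₁, k₂) and ‖k_S‖ = √(k₁² + k₂²). -/
open MeasureTheory Real

/-- The point of ℝ³ (as a Euclidean space) with the given coordinates. -/
noncomputable def vec3 (a b c : ℝ) : EuclideanSpace ℝ (Fin 3) :=
  (WithLp.equiv 2 (Fin 3 → ℝ)).symm ![a, b, c]

namespace SensorAux

lemma vec3_apply (a b c : ℝ) (i : Fin 3) : vec3 a b c i = ![a, b, c] i := rfl

lemma vec3_eta (x : EuclideanSpace ℝ (Fin 3)) : vec3 (x 0) (x 1) (x 2) = x := by
  ext i; fin_cases i <;> rfl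

lemma vec3_norm (a b c : ℝ) : ‖vec3 a b c‖ = Real.sqrt (a ^ 2 + b ^ 2 + c ^ 2) := by
  rw [EuclideanSpace.norm_eq]
  congr 1
  simp only [Fin.sum_univ_three, vec3_apply]
  norm_num [sq_abs]
  rfl

lemma vec3_inner (a b c a' b' c' : ℝ) :
    (inner ℝ (vec3 a b c) (vec3 a' b' c') : ℝ) = a * a' + b * b' + c * c' := by
  simp [PiLp.inner_apply, Fin.sum_univ_three, vec3_apply]
  ring

/-- Negation of the third coordinate, as a linear isometry equivalence. -/
noncomputable def negL : EuclideanSpace ℝ (Fin 3) ≃ₗᵢ[ℝ] EuclideanSpace ℝ (Fin 3) :=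
  LinearIsometryEquiv.piLpCongrRight 2
    ![LinearIsometryEquiv.refl ℝ ℝ, LinearIsometryEquiv.refl ℝ ℝ, LinearIsometryEquiv.neg ℝ]

lemma negL_vec3 (a b c : ℝ) : negL (vec3 a b c) = vec3 a b (-c) := by
  ext i
  fin_cases i <;>
    simp [negL, LinearIsometryEquiv.piLpCongrRight_apply, vec3]

lemma fourier_even (p₀ : SchwartzMap (EuclideanSpace ℝ (Fin 3)) ℂ)
    (heven : ∀ a b c : ℝ, p₀ (vec3 a b (-c)) = p₀ (vec3 a b c)) (a b c : ℝ) :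
    FourierTransform.fourier (⇑p₀) (vec3 a b (-c)) = FourierTransform.fourier (⇑p₀) (vec3 a b c) := by
  have hcomp : (⇑p₀) ∘ (negL : EuclideanSpace ℝ (Fin 3) → EuclideanSpace ℝ (Fin 3)) = ⇑p₀ := by
    funext x
    have : negL x = vec3 (x 0) (x 1) (-(x 2)) := by
      conv_lhs => rw [← vec3_eta x, negL_vec3]
    rw [Function.comp_apply, this, heven, vec3_eta]
  have := Real.fourier_comp_linearIsometry negL (⇑p₀) (vec3 a b c)
  rw [hcomp, negL_vec3] at this
  exact this.symm

/-- The measure-preserving identification of `ℝ³` with `(ℝ × ℝ) × ℝ`. -/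
noncomputable def splitEquiv : EuclideanSpace ℝ (Fin 3) ≃ᵐ (ℝ × ℝ) × ℝ :=
  (MeasurableEquiv.toLp 2 (Fin 3 → ℝ)).symm.trans <|
    (MeasurableEquiv.piFinSuccAbove (fun _ => ℝ) 2).trans <|
      (MeasurableEquiv.prodComm).trans
        (MeasurableEquiv.prodCongr MeasurableEquiv.finTwoArrow (MeasurableEquiv.refl ℝ))

lemma splitEquiv_apply (x : EuclideanSpace ℝ (Fin 3)) :
    splitEquiv x = ((x 0, x 1), x 2) := by
  simp only [splitEquiv, MeasurableEquiv.trans_apply]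
  rfl

lemma splitEquiv_symm_apply (k₁ k₂ c : ℝ) :
    splitEquiv.symm ((k₁, k₂), c) = vec3 k₁ k₂ c := by
  have h : splitEquiv (vec3 k₁ k₂ c) = ((k₁, k₂), c) := by
    rw [splitEquiv_apply]; rfl
  rw [← h, MeasurableEquiv.symm_apply_apply]

lemma splitEquiv_measurePreserving : MeasurePreserving splitEquiv := by
  refine ((EuclideanSpace.volume_preserving_symm_measurableEquiv_toLp (Fin 3)).trans ?_)
  refine ((volume_preserving_piFinSuccAbove (fun _ : Fin 3 => ℝ) 2).trans ?_)
  refine MeasurePreserving.trans (μb := volume) ?_ ?_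
  · exact ⟨(MeasurableEquiv.prodComm).measurable, by
      rw [Measure.volume_eq_prod, Measure.volume_eq_prod]
      exact Measure.measurePreserving_swap.map_eq⟩
  · exact ⟨(MeasurableEquiv.prodCongr MeasurableEquiv.finTwoArrow (MeasurableEquiv.refl ℝ)).measurable, by
      rw [Measure.volume_eq_prod, Measure.volume_eq_prod]
      exact ((volume_preserving_finTwoArrow ℝ).prod (MeasurePreserving.id _)).map_eq⟩

lemma vec3_decomp (a b c : ℝ) : vec3 a b c = vec3 a b 0 + c • vec3 0 0 1 := by
  ext i
  fin_cases i <;> simp [vec3_apply, PiLp.add_apply, PiLp.smul_apply]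

lemma continuous_vec3 (a b : ℝ) : Continuous fun c : ℝ => vec3 a b c := by
  have h : (fun c : ℝ => vec3 a b c) = fun c : ℝ => vec3 a b 0 + c • vec3 0 0 1 :=
    funext fun c => vec3_decomp a b c
  rw [h]
  exact continuous_const.add (continuous_id.smul continuous_const)

lemma schwartz_slice_integrable (f : SchwartzMap (EuclideanSpace ℝ (Fin 3)) ℂ) (k₁ k₂ : ℝ) :
    Integrable (fun c : ℝ => f (vec3 k₁ k₂ c)) := by
  obtain ⟨C, -, hC⟩ := f.decay 2 0
  obtain ⟨C₀, -, hC₀⟩ := f.decay 0 0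
  simp only [norm_iteratedFDeriv_zero, pow_zero, one_mul] at hC hC₀
  have hkey : ∀ c : ℝ, ‖f (vec3 k₁ k₂ c)‖ ≤ (C₀ + C) * (1 + c ^ 2)⁻¹ := by
    intro c
    have h1 : (0:ℝ) < 1 + c ^ 2 := by positivity
    rw [← div_eq_mul_inv, le_div_iff₀ h1]
    have hn : ‖vec3 k₁ k₂ c‖ ^ 2 = k₁ ^ 2 + k₂ ^ 2 + c ^ 2 := by
      rw [vec3_norm, sq_sqrt (by positivity)]
    have h2 := hC (vec3 k₁ k₂ c)
    have h3 := hC₀ (vec3 k₁ k₂ c)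
    have h4 : c ^ 2 * ‖f (vec3 k₁ k₂ c)‖ ≤ C := by
      refine le_trans ?_ h2
      have : c ^ 2 ≤ ‖vec3 k₁ k₂ c‖ ^ 2 := by rw [hn]; nlinarith [sq_nonneg k₁, sq_nonneg k₂]
      nlinarith [norm_nonneg (f (vec3 k₁ k₂ c))]
    nlinarith
  have hD : 0 ≤ C₀ + C := by
    have h3 := hC₀ (vec3 0 0 0)
    have h2 := hC (vec3 0 0 0)
    nlinarith [norm_nonneg (f (vec3 0 0 0)), sq_nonneg ‖vec3 0 0 0‖,
      mul_nonneg (sq_nonneg ‖vec3 0 0 0‖) (norm_nonneg (f (vec3 0 0 0)))]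
  refine Integrable.mono ((integrable_inv_one_add_sq).const_mul (C₀ + C))
    ((f.continuous.comp (continuous_vec3 k₁ k₂)).aestronglyMeasurable) ?_
  refine ae_of_all _ fun c => ?_
  have h1 : (0:ℝ) < 1 + c ^ 2 := by positivity
  calc ‖f (vec3 k₁ k₂ c)‖ ≤ (C₀ + C) * (1 + c ^ 2)⁻¹ := hkey c
    _ ≤ ‖(C₀ + C) * (1 + c ^ 2)⁻¹‖ := le_abs_self _

lemma integral_even_eq (g : ℝ → ℂ) (hg : Integrable g) (he : ∀ c, g (-c) = g c) :
    ∫ c, g c = 2 * ∫ c in Set.Ioi (0:ℝ), g c := by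
  have h1 : ∫ c in Set.Iic (0:ℝ), g c = ∫ c in Set.Ioi (0:ℝ), g c := by
    have := integral_comp_neg_Ioi (c := (0:ℝ)) g
    rw [neg_zero] at this
    rw [← this]
    exact setIntegral_congr_fun measurableSet_Ioi fun c _ => (he c)
  rw [← intervalIntegral.integral_Iic_add_Ioi (b := (0:ℝ)) hg.integrableOn hg.integrableOn, h1, two_mul]

lemma cov (c₀ : ℝ) (hc₀ : 0 < c₀) (s : ℝ) (hs : 0 ≤ s) (g : ℝ → ℂ) :
    (∫ c in Set.Ioi (0:ℝ), g c) =
      ∫ ω in Set.Ioi (c₀ * Real.sqrt s),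
        ((ω / c₀ ^ 2) / Real.sqrt ((ω / c₀) ^ 2 - s)) • g (Real.sqrt ((ω / c₀) ^ 2 - s)) := by
  set φ : ℝ → ℝ := fun ω => Real.sqrt ((ω / c₀) ^ 2 - s) with hφ
  set φ' : ℝ → ℝ := fun ω => (ω / c₀ ^ 2) / Real.sqrt ((ω / c₀) ^ 2 - s) with hφ'
  have hmem : ∀ ω ∈ Set.Ioi (c₀ * Real.sqrt s), 0 < (ω / c₀) ^ 2 - s := by
    intro ω hω
    simp only [Set.mem_Ioi] at hω
    have h1 : Real.sqrt s < ω / c₀ := by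
      rw [lt_div_iff₀ hc₀]; linarith [hω, mul_comm c₀ (Real.sqrt s)]
    have h2 : s < (ω / c₀) ^ 2 := by
      have := Real.sqrt_nonneg s
      nlinarith [Real.sq_sqrt hs]
    linarith
  have hpos : ∀ ω ∈ Set.Ioi (c₀ * Real.sqrt s), 0 < ω := by
    intro ω hω
    simp only [Set.mem_Ioi] at hω
    have := Real.sqrt_nonneg s
    nlinarith
  have himg : φ '' Set.Ioi (c₀ * Real.sqrt s) = Set.Ioi (0:ℝ) := by
    ext y
    constructor
    · rintro ⟨ω, hω, rfl⟩
      exact Real.sqrt_pos.2 (hmem ω hω)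
    · intro hy
      simp only [Set.mem_Ioi] at hy
      refine ⟨c₀ * Real.sqrt (y ^ 2 + s), ?_, ?_⟩
      · simp only [Set.mem_Ioi]
        have : Real.sqrt s < Real.sqrt (y ^ 2 + s) := by
          apply Real.sqrt_lt_sqrt hs; nlinarith
        exact (mul_lt_mul_iff_right₀ hc₀).2 this
      · have h1 : c₀ * Real.sqrt (y ^ 2 + s) / c₀ = Real.sqrt (y ^ 2 + s) := by
          field_simp
        simp only [hφ, h1]
        rw [Real.sq_sqrt (by positivity)]
        have : y ^ 2 + s - s = y ^ 2 := by ring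
        rw [this, Real.sqrt_sq hy.le]
  have hderiv : ∀ ω ∈ Set.Ioi (c₀ * Real.sqrt s),
      HasDerivWithinAt φ (φ' ω) (Set.Ioi (c₀ * Real.sqrt s)) ω := by
    intro ω hω
    have hu : HasDerivAt (fun ω : ℝ => (ω / c₀) ^ 2 - s) (2 * (ω / c₀) ^ 1 * (1 / c₀)) ω := by
      have h1 : HasDerivAt (fun ω : ℝ => ω / c₀) (1 / c₀) ω := (hasDerivAt_id ω).div_const c₀
      exact (h1.pow 2).sub_const s
    have hne : (ω / c₀) ^ 2 - s ≠ 0 := (hmem ω hω).ne'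
    have hsq := (Real.hasDerivAt_sqrt hne).comp ω hu
    have heq : 1 / (2 * Real.sqrt ((ω / c₀) ^ 2 - s)) * (2 * (ω / c₀) ^ 1 * (1 / c₀)) = φ' ω := by
      have h2 : Real.sqrt ((ω / c₀) ^ 2 - s) ≠ 0 := (Real.sqrt_pos.2 (hmem ω hω)).ne'
      simp only [hφ', pow_one]
      field_simp
    rw [heq] at hsq
    exact hsq.hasDerivWithinAt
  have hinj : Set.InjOn φ (Set.Ioi (c₀ * Real.sqrt s)) := by
    intro a ha b hb hab
    have hua : 0 < (a / c₀) ^ 2 - s := hmem a ha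
    have hub : 0 < (b / c₀) ^ 2 - s := hmem b hb
    have h1 : (a / c₀) ^ 2 - s = (b / c₀) ^ 2 - s :=
      (Real.sqrt_inj hua.le hub.le).1 hab
    have ha0 : 0 < a := hpos a ha
    have hb0 : 0 < b := hpos b hb
    have hc : c₀ ≠ 0 := hc₀.ne'
    field_simp at h1
    have h2 : a ^ 2 = b ^ 2 := by linarith
    exact (pow_left_inj₀ ha0.le hb0.le two_ne_zero).1 h2
  have := integral_image_eq_integral_abs_deriv_smul measurableSet_Ioi hderiv hinj g
  rw [himg] at this
  rw [this]
  refine setIntegral_congr_fun measurableSet_Ioi fun ω hω => ?_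
  have h1 : 0 < φ' ω := by
    have := hpos ω hω
    have := hmem ω hω
    have h2 : (0:ℝ) < Real.sqrt ((ω / c₀) ^ 2 - s) := Real.sqrt_pos.2 (hmem ω hω)
    simp only [hφ']
    positivity
  rw [abs_of_pos h1]

lemma norm_cos_mul_exp (θ r : ℝ) (z : ℂ) :
    ‖(Real.cos θ : ℂ) * z * Complex.exp (2 * π * Complex.I * (r : ℂ))‖ ≤ ‖z‖ := by
  have h2 : ‖Complex.exp (2 * π * Complex.I * (r : ℂ))‖ = 1 := by
    have h : 2 * π * Complex.I * (r : ℂ) = ((2 * π * r : ℝ) : ℂ) * Complex.I := by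
      push_cast; ring
    rw [h, Complex.norm_exp_ofReal_mul_I]
  rw [norm_mul, norm_mul, h2, mul_one]
  have h1 : ‖(Real.cos θ : ℂ)‖ ≤ 1 := by
    rw [Complex.norm_real, Real.norm_eq_abs]
    exact Real.abs_cos_le_one θ
  nlinarith [norm_nonneg z]

end SensorAux

theorem sensor_plane_trace_representation
    (c₀ : ℝ) (hc₀ : 0 < c₀)
    (p₀ : SchwartzMap (EuclideanSpace ℝ (Fin 3)) ℂ)
    (heven : ∀ a b c : ℝ, p₀ (vec3 a b (-c)) = p₀ (vec3 a b c))
    (p : EuclideanSpace ℝ (Fin 3) → ℝ → ℂ)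
    (hp : ∀ (x : EuclideanSpace ℝ (Fin 3)) (t : ℝ),
      p x t = ∫ ξ : EuclideanSpace ℝ (Fin 3),
        (Real.cos (2 * π * c₀ * ‖ξ‖ * t) : ℂ) * FourierTransform.fourier (⇑p₀) ξ *
          Complex.exp (2 * π * Complex.I * ((inner ℝ x ξ : ℝ) : ℂ))) :
    ∀ (x₁ x₂ t : ℝ),
      p (vec3 x₁ x₂ 0) t =
        ∫ kS : ℝ × ℝ,
          Complex.exp (2 * π * Complex.I * ((x₁ * kS.1 + x₂ * kS.2 : ℝ) : ℂ)) *
            (2 * ∫ ω in Set.Ioi (c₀ * Real.sqrt (kS.1 ^ 2 + kS.2 ^ 2)),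
              (((ω / c₀ ^ 2) / Real.sqrt ((ω / c₀) ^ 2 - (kS.1 ^ 2 + kS.2 ^ 2)) : ℝ) : ℂ) *
                FourierTransform.fourier (⇑p₀)
                  (vec3 kS.1 kS.2 (Real.sqrt ((ω / c₀) ^ 2 - (kS.1 ^ 2 + kS.2 ^ 2)))) *
                (Real.cos (2 * π * ω * t) : ℂ)) := by
  intro x₁ x₂ t
  have hFc : FourierTransform.fourier (⇑p₀) = ⇑(SchwartzMap.fourierTransformCLM ℂ p₀) := rfl
  set F := SchwartzMap.fourierTransformCLM ℂ p₀ with hFdef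
  rw [hp]
  simp only [hFc]
  set G : EuclideanSpace ℝ (Fin 3) → ℂ := fun ξ =>
    (Real.cos (2 * π * c₀ * ‖ξ‖ * t) : ℂ) * F ξ *
      Complex.exp (2 * π * Complex.I * ((inner ℝ (vec3 x₁ x₂ 0) ξ : ℝ) : ℂ)) with hGdef
  have hGcont : Continuous G := by
    have h1 : Continuous fun ξ : EuclideanSpace ℝ (Fin 3) =>
        (Real.cos (2 * π * c₀ * ‖ξ‖ * t) : ℂ) :=
      Complex.continuous_ofReal.comp (Real.continuous_cos.comp ((continuous_const.mul continuous_norm).mul continuous_const))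
    have h2 : Continuous fun ξ : EuclideanSpace ℝ (Fin 3) =>
        Complex.exp (2 * π * Complex.I * ((inner ℝ (vec3 x₁ x₂ 0) ξ : ℝ) : ℂ)) :=
      Complex.continuous_exp.comp (continuous_const.mul
        (Complex.continuous_ofReal.comp (Continuous.inner continuous_const continuous_id)))
    exact (h1.mul F.continuous).mul h2
  have hGint : Integrable G := by
    refine F.integrable.mono hGcont.aestronglyMeasurable (ae_of_all _ fun ξ => ?_)
    exact SensorAux.norm_cos_mul_exp _ _ _
  have hmp := SensorAux.splitEquiv_measurePreserving.symm SensorAux.splitEquiv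
  have hemb := SensorAux.splitEquiv.symm.measurableEmbedding
  have e1 : ∫ ξ, G ξ = ∫ q : (ℝ × ℝ) × ℝ, G (SensorAux.splitEquiv.symm q) :=
    (hmp.integral_comp hemb G).symm
  have e2 : (fun q : (ℝ × ℝ) × ℝ => G (SensorAux.splitEquiv.symm q)) =
      fun q : (ℝ × ℝ) × ℝ => G (vec3 q.1.1 q.1.2 q.2) := by
    funext q
    exact congrArg G (SensorAux.splitEquiv_symm_apply q.1.1 q.1.2 q.2)
  have hint2 : Integrable (fun q : (ℝ × ℝ) × ℝ => G (vec3 q.1.1 q.1.2 q.2)) := by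
    rw [← e2]
    exact (hmp.integrable_comp_emb hemb).2 hGint
  have e3 : (∫ q : (ℝ × ℝ) × ℝ, G (vec3 q.1.1 q.1.2 q.2)) =
      ∫ kS : ℝ × ℝ, ∫ c : ℝ, G (vec3 kS.1 kS.2 c) := by
    conv_lhs => rw [Measure.volume_eq_prod]
    exact MeasureTheory.integral_prod _ (by rwa [← Measure.volume_eq_prod])
  rw [e1, e2, e3]
  refine integral_congr_ae (Filter.Eventually.of_forall fun kS => ?_)
  obtain ⟨k₁, k₂⟩ := kS
  simp only
  -- inner product on the slice
  have hin : ∀ c : ℝ, (inner ℝ (vec3 x₁ x₂ 0) (vec3 k₁ k₂ c) : ℝ) = x₁ * k₁ + x₂ * k₂ := by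
    intro c
    rw [SensorAux.vec3_inner]
    ring
  set g : ℝ → ℂ := fun c =>
    (Real.cos (2 * π * c₀ * ‖vec3 k₁ k₂ c‖ * t) : ℂ) * F (vec3 k₁ k₂ c) with hgdef
  set Ex : ℂ := Complex.exp (2 * π * Complex.I * ((x₁ * k₁ + x₂ * k₂ : ℝ) : ℂ)) with hExdef
  have e4 : (∫ c : ℝ, G (vec3 k₁ k₂ c)) = (∫ c : ℝ, g c) * Ex := by
    rw [← integral_mul_const]
    refine integral_congr_ae (Filter.Eventually.of_forall fun c => ?_)
    simp only [hGdef, hgdef, hExdef, hin c]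
  have hslice := SensorAux.schwartz_slice_integrable F k₁ k₂
  have hgcont : Continuous g := by
    have h1 : Continuous fun c : ℝ => (Real.cos (2 * π * c₀ * ‖vec3 k₁ k₂ c‖ * t) : ℂ) :=
      Complex.continuous_ofReal.comp (Real.continuous_cos.comp
        (by exact (((continuous_const.mul ((SensorAux.continuous_vec3 k₁ k₂).norm)).mul
          continuous_const))))
    exact h1.mul (F.continuous.comp (SensorAux.continuous_vec3 k₁ k₂))
  have hg : Integrable g := by
    refine hslice.mono hgcont.aestronglyMeasurable (ae_of_all _ fun c => ?_)
    rw [hgdef]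
    simp only
    rw [norm_mul]
    have h1 : ‖(Real.cos (2 * π * c₀ * ‖vec3 k₁ k₂ c‖ * t) : ℂ)‖ ≤ 1 := by
      rw [Complex.norm_real, Real.norm_eq_abs]
      exact Real.abs_cos_le_one _
    nlinarith [norm_nonneg (F (vec3 k₁ k₂ c)), norm_nonneg (g c)]
  have hgeven : ∀ c : ℝ, g (-c) = g c := by
    intro c
    have hn : ‖vec3 k₁ k₂ (-c)‖ = ‖vec3 k₁ k₂ c‖ := by
      rw [SensorAux.vec3_norm, SensorAux.vec3_norm]
      norm_num
    have hFe : F (vec3 k₁ k₂ (-c)) = F (vec3 k₁ k₂ c) := by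
      have h := SensorAux.fourier_even p₀ heven k₁ k₂ c
      rw [hFc] at h
      exact h
    simp only [hgdef, hn, hFe]
  set sVal : ℝ := k₁ ^ 2 + k₂ ^ 2 with hsVal
  have hs : (0:ℝ) ≤ sVal := by positivity
  have e5 : (∫ c : ℝ, g c) = 2 * ∫ c in Set.Ioi (0:ℝ), g c :=
    SensorAux.integral_even_eq g hg hgeven
  have e6 := SensorAux.cov c₀ hc₀ sVal hs g
  have e7 : (∫ ω in Set.Ioi (c₀ * Real.sqrt sVal),
        ((ω / c₀ ^ 2) / Real.sqrt ((ω / c₀) ^ 2 - sVal)) • g (Real.sqrt ((ω / c₀) ^ 2 - sVal))) =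
      ∫ ω in Set.Ioi (c₀ * Real.sqrt sVal),
        (((ω / c₀ ^ 2) / Real.sqrt ((ω / c₀) ^ 2 - sVal) : ℝ) : ℂ) *
          F (vec3 k₁ k₂ (Real.sqrt ((ω / c₀) ^ 2 - sVal))) * (Real.cos (2 * π * ω * t) : ℂ) := by
    refine setIntegral_congr_fun measurableSet_Ioi fun ω hω => ?_
    simp only [Set.mem_Ioi] at hω
    have hω0 : 0 < ω := by
      have := Real.sqrt_nonneg sVal
      nlinarith
    have hu : 0 ≤ (ω / c₀) ^ 2 - sVal := by
      have h1 : Real.sqrt sVal < ω / c₀ := by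
        rw [lt_div_iff₀ hc₀]
        linarith [mul_comm c₀ (Real.sqrt sVal), hω]
      have := Real.sqrt_nonneg sVal
      nlinarith [Real.sq_sqrt hs]
    have hnrm : ‖vec3 k₁ k₂ (Real.sqrt ((ω / c₀) ^ 2 - sVal))‖ = ω / c₀ := by
      rw [SensorAux.vec3_norm, Real.sq_sqrt hu]
      have h2 : k₁ ^ 2 + k₂ ^ 2 + ((ω / c₀) ^ 2 - sVal) = (ω / c₀) ^ 2 := by
        rw [hsVal]; ring
      rw [h2, Real.sqrt_sq (by positivity)]
    have hcosarg : 2 * π * c₀ * (ω / c₀) * t = 2 * π * ω * t := by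
      field_simp
    rw [hgdef]
    simp only [hnrm, hcosarg]
    rw [Complex.real_smul]
    ring
  rw [e4, e5, e6, e7, mul_comm]
end
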